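/- Let 𝔄 be a Boolean algebra with an operator ◇ that admits a conjugate, i.e., there is a function p: 𝔄 → 𝔄 such that for all a, b: a ∧ ◇b = ⊥ if and only if p(a) ∧ b = ⊥. Then 𝔄 satisfies condition 𝓡: for all a, b with a ∧ ◇b ≠ ⊥, there exists c with ⊥ ≠ c ≤ b such that a ∧ ◇d ≠ ⊥ for all d with ⊥ ≠ d ≤ c. (Witness: c := p(a) ∧ b.) -/
import Mathlib

/-- If the operator `f` admits a conjugate `p`, then condition 𝓡 holds. -/
theorem stmt_4 {α : Type*} [BooleanAlgebra α] (f p : α → α)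
    (hjoin : ∀ x y : α, f (x ⊔ y) = f x ⊔ f y) (hbot : f ⊥ = ⊥)
    (hconj : ∀ a b : α, a ⊓ f b = ⊥ ↔ p a ⊓ b = ⊥) :
    ∀ a b : α, a ⊓ f b ≠ ⊥ →
      ∃ c, c ≠ ⊥ ∧ c ≤ b ∧ ∀ d, d ≠ ⊥ → d ≤ c → a ⊓ f d ≠ ⊥ := by
  intro a b hab
  refine ⟨p a ⊓ b, fun h => hab ((hconj a b).mpr h), inf_le_right, ?_⟩
  intro d hd hdc hcontra
  apply hd
  have : p a ⊓ d = ⊥ := (hconj a d).mp hcontra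
  have hdpa : d ≤ p a := hdc.trans inf_le_left
  rwa [inf_eq_right.mpr hdpa] at this
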